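/- If a and b are non-negative integers, then the binomial coefficient C(a+b, a) is at most 2^(2*sqrt(a*b)). -/

import Mathlib

open Real

lemma exp_neg_le_quad {x : ℝ} (h0 : 0 ≤ x) (h1 : x ≤ 1) :
    Real.exp (-x) ≤ 1 - x + x ^ 2 / 2 := by
  have hb := Real.exp_bound (x := -x) (by rwa [abs_neg, abs_of_nonneg h0]) (n := 4) (by norm_num)
  rw [abs_neg, abs_of_nonneg h0] at hb
  have h := (abs_sub_le_iff.1 hb).1
  simp [Finset.sum_range_succ, Nat.factorial] at h
  nlinarith [pow_nonneg h0 3, pow_nonneg h0 4, pow_le_pow_left₀ h0 h1 4, sq_nonneg x]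

lemma exp_neg_ge_cubic {x : ℝ} (h0 : 0 ≤ x) (h1 : x ≤ 1) :
    1 - x + x ^ 2 / 2 - (7/32) * x ^ 3 ≤ Real.exp (-x) := by
  have hb := Real.exp_bound (x := -x) (by rwa [abs_neg, abs_of_nonneg h0]) (n := 4) (by norm_num)
  rw [abs_neg, abs_of_nonneg h0] at hb
  have h := (abs_sub_le_iff.1 hb).2
  simp [Finset.sum_range_succ, Nat.factorial] at h
  nlinarith [pow_nonneg h0 3, pow_nonneg h0 4,
    pow_le_pow_left₀ h0 h1 4, pow_le_pow_left₀ h0 h1 3,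
    mul_le_of_le_one_right (pow_nonneg h0 3) h1]

set_option maxHeartbeats 1000000 in
lemma Qpos {c d : ℝ} (hc1 : 0.6931 ≤ c) (hc2 : c ≤ 0.6932)
    (hd0 : 0 ≤ d) (hd1 : d ≤ 1) :
    0 ≤ c * (1 + d) + c^2 * ((4241/10000) - 3/2 - 2*d - d^2/2)
      + c^3 * d * (1/2 + d/2 + (4241/10000)) - (4241/10000) * c^4 * d^2 / 2 := by
  have hc0 : (0:ℝ) < c := by linarith
  have h2a : c^2 ≤ 0.48053 := by nlinarith
  have h2b : 0.48038 ≤ c^2 := by nlinarith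
  have h3a : c^3 ≤ 0.33311 := by nlinarith
  have h3b : 0.33295 ≤ c^3 := by nlinarith
  have h4a : c^4 ≤ 0.23091 := by nlinarith
  have h4b : 0.23077 ≤ c^4 := by nlinarith
  nlinarith [mul_nonneg hd0 (sub_nonneg.2 hd1), sq_nonneg d, sq_nonneg (1-d),
    mul_nonneg (mul_nonneg hd0 hd0) (sub_nonneg.2 hd1)]

set_option maxHeartbeats 1000000 in
lemma polykey {c d : ℝ} (hc1 : 0.6931 ≤ c) (hc2 : c ≤ 0.6932)
    (hd0 : 0 ≤ d) (hd1 : d ≤ 1) :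
    (1 + d) ^ 2 ≤ ((1 + d) ^ 2 - c * d * (1 + d) + (4241/10000) * (c * d) ^ 2) *
      (1 + c * d - (c * d) ^ 2 / 2) := by
  have hQ := Qpos hc1 hc2 hd0 hd1
  nlinarith [mul_nonneg (sq_nonneg d) hQ]

lemma log_two_bounds : 0.6931 ≤ Real.log 2 ∧ Real.log 2 ≤ 0.6932 :=
  ⟨by linarith [Real.log_two_gt_d9], by linarith [Real.log_two_lt_d9]⟩


set_option maxHeartbeats 1000000 in
lemma mid_exp {c d y : ℝ} (hc1 : 0.6931 ≤ c) (hc2 : c ≤ 0.6932)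
    (hd0 : 0 ≤ d) (hd1 : d ≤ 1) (hyt : y * (1 + d) = c * d)
    (hy0 : 0 ≤ y) (hy1 : y ≤ 1) (hyb : y ≤ 0.3467) :
    Real.exp (-(c * d)) + Real.exp y ≤ 2 := by
  have hx0 : 0 ≤ c * d := by positivity
  have hx1 : c * d ≤ 1 := by nlinarith
  have hA : Real.exp (-(c * d)) ≤ 1 - c * d + (c*d) ^ 2 / 2 := exp_neg_le_quad hx0 hx1
  have hB0 : (0:ℝ) < 1 - y + (4241/10000) * y ^ 2 := by nlinarith
  have hB : 1 - y + (4241/10000) * y ^ 2 ≤ Real.exp (-y) := by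
    have h7 : (7:ℝ)/32 * y ^ 3 ≤ (759/10000) * y ^ 2 := by nlinarith [sq_nonneg y]
    have := exp_neg_ge_cubic hy0 hy1
    nlinarith
  have hEy : Real.exp y ≤ (1 - y + (4241/10000) * y ^ 2)⁻¹ := by
    have hrw : Real.exp y = (Real.exp (-y))⁻¹ := by rw [Real.exp_neg, inv_inv]
    rw [hrw]
    exact inv_anti₀ hB0 hB
  have hBform : (1 - y + (4241/10000) * y ^ 2) * (1 + d) ^ 2
      = (1 + d) ^ 2 - c * d * (1 + d) + (4241/10000) * (c * d) ^ 2 := by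
    linear_combination ((4241/10000)*(y*(1+d)+c*d) - (1+d)) * hyt
  have hpk := polykey hc1 hc2 hd0 hd1
  have hpos : (0:ℝ) < (1 + d) ^ 2 := by positivity
  have hM0 : (0:ℝ) < 1 + c * d - (c * d) ^ 2 / 2 := by nlinarith
  have h1M : 1 ≤ (1 - y + (4241/10000) * y ^ 2) * (1 + c * d - (c * d) ^ 2 / 2) := by
    have h' : 1 * (1 + d) ^ 2 ≤
        ((1 - y + (4241/10000) * y ^ 2) * (1 + c * d - (c * d) ^ 2 / 2)) * (1 + d) ^ 2 := by
      nlinarith [hpk, hBform]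
    exact le_of_mul_le_mul_right (by linarith [h']) hpos
  have hinv : (1 - y + (4241/10000) * y ^ 2)⁻¹ ≤ 1 + c * d - (c * d) ^ 2 / 2 := by
    rw [inv_eq_one_div, div_le_iff₀ hB0]
    nlinarith [h1M]
  nlinarith [hA, le_trans hEy hinv]

set_option maxHeartbeats 1000000 in
lemma core_mid {t : ℝ} (h1 : 1 ≤ t) (h2 : t ≤ 2) :
    Real.exp (-(t * Real.log 2)) + Real.exp (-(Real.log 2 / t)) ≤ 1 := by
  obtain ⟨hc1, hc2⟩ := log_two_bounds
  have ht0 : (0:ℝ) < t := by linarith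
  have e1 : Real.exp (-(t * Real.log 2)) = (1/2) * Real.exp (-(Real.log 2 * (t-1))) := by
    rw [← Real.exp_log (by norm_num : (0:ℝ) < 1/2), ← Real.exp_add]
    congr 1
    rw [show ((1:ℝ)/2) = 2⁻¹ by norm_num, Real.log_inv]
    ring
  have e2 : Real.exp (-(Real.log 2 / t)) = (1/2) * Real.exp (Real.log 2 * (t-1) / t) := by
    rw [← Real.exp_log (by norm_num : (0:ℝ) < 1/2), ← Real.exp_add]
    congr 1
    rw [show ((1:ℝ)/2) = 2⁻¹ by norm_num, Real.log_inv]
    field_simp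
    ring
  rw [e1, e2]
  have key := mid_exp (c := Real.log 2) (d := t - 1) (y := Real.log 2 * (t-1) / t)
    hc1 hc2 (by linarith) (by linarith)
    (by field_simp; ring)
    (by exact div_nonneg (mul_nonneg (by linarith) (by linarith)) (by linarith))
    (by rw [div_le_one ht0]; nlinarith)
    (by rw [div_le_iff₀ ht0]; nlinarith)
  calc 1/2 * Real.exp (-(Real.log 2 * (t-1))) + 1/2 * Real.exp (Real.log 2 * (t-1) / t)
      = (Real.exp (-(Real.log 2 * (t-1))) + Real.exp (Real.log 2 * (t-1) / t)) / 2 := by ring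
    _ ≤ 2 / 2 := by linarith [key]
    _ = 1 := by norm_num

set_option maxHeartbeats 1000000 in
lemma core_tail {t : ℝ} (h2 : 2 ≤ t) :
    Real.exp (-(t * Real.log 2)) + Real.exp (-(Real.log 2 / t)) ≤ 1 := by
  obtain ⟨hc1, hc2⟩ := log_two_bounds
  have ht0 : (0:ℝ) < t := by linarith
  have hy0 : 0 ≤ Real.log 2 / t := by positivity
  have hy1 : Real.log 2 / t ≤ 1 := by rw [div_le_one ht0]; linarith
  have hB := exp_neg_le_quad hy0 hy1
  have hD0 : (0:ℝ) < 1 + Real.log 2 * (t - 2) := by nlinarith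
  have hA : Real.exp (-(t * Real.log 2)) ≤ (1/4) * (1 + Real.log 2 * (t - 2))⁻¹ := by
    have e : Real.exp (-(t * Real.log 2))
        = (1/4) * Real.exp (-(Real.log 2 * (t - 2))) := by
      rw [← Real.exp_log (by norm_num : (0:ℝ) < 1/4), ← Real.exp_add]
      congr 1
      rw [show (1:ℝ)/4 = ((2:ℝ)*2)⁻¹ by norm_num, Real.log_inv,
        Real.log_mul two_ne_zero two_ne_zero]
      ring
    rw [e]
    have h1e : 1 + Real.log 2 * (t - 2) ≤ Real.exp (Real.log 2 * (t - 2)) := by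
      linarith [Real.add_one_le_exp (Real.log 2 * (t - 2))]
    have : Real.exp (-(Real.log 2 * (t - 2))) ≤ (1 + Real.log 2 * (t - 2))⁻¹ := by
      rw [Real.exp_neg]
      exact inv_anti₀ hD0 h1e
    nlinarith [this]
  have hpoly : t ^ 2 ≤ (4 * Real.log 2 * t - 2 * (Real.log 2)^2) *
      (1 + Real.log 2 * (t - 2)) := by
    have h2a : (Real.log 2)^2 ≤ 0.48053 := by nlinarith
    have h2b : 0.48038 ≤ (Real.log 2)^2 := by nlinarith
    have h3a : (Real.log 2)^3 ≤ 0.33311 := by nlinarith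
    have h3b : 0.33295 ≤ (Real.log 2)^3 := by nlinarith
    have ht2 : 0 ≤ t - 2 := by linarith
    nlinarith [sq_nonneg (t - 2), mul_nonneg ht2 ht2, ht2,
      mul_nonneg (mul_nonneg ht2 ht2) (sub_nonneg.2 h2b),
      mul_nonneg ht2 (sub_nonneg.2 h2b), mul_nonneg ht2 (sub_nonneg.2 h3b),
      mul_nonneg ht2 (sub_nonneg.2 hc1)]
  have hquart : (1/4 : ℝ) * (1 + Real.log 2 * (t - 2))⁻¹
      ≤ Real.log 2 / t - (Real.log 2)^2 / (2 * t^2) := by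
    have e14 : (1/4:ℝ) * (1 + Real.log 2 * (t - 2))⁻¹
        = 1 / (4 * (1 + Real.log 2 * (t - 2))) := by
      field_simp
    have e2 : Real.log 2 / t - (Real.log 2)^2 / (2 * t^2)
        = (2 * Real.log 2 * t - (Real.log 2)^2) / (2 * t^2) := by
      field_simp
    rw [e14, e2, div_le_div_iff₀ (by positivity) (by positivity)]
    nlinarith [hpoly]
  have hfin : Real.exp (-(Real.log 2 / t)) ≤ 1 - Real.log 2 / t + (Real.log 2 / t)^2/2 := hB
  have e3 : (Real.log 2 / t)^2/2 = (Real.log 2)^2 / (2 * t^2) := by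
    field_simp
  linarith [hA, hquart, hfin, e3.le, e3.ge]

lemma core {t : ℝ} (h1 : 1 ≤ t) :
    Real.exp (-(t * Real.log 2)) + Real.exp (-(Real.log 2 / t)) ≤ 1 := by
  rcases le_total t 2 with h | h
  · exact core_mid h1 h
  · exact core_tail h

lemma two_rpow_core {u v : ℝ} (hu : 0 < u) (hv : 0 < v) (huv : 1 ≤ u * v) :
    (2:ℝ) ^ (-u) + (2:ℝ) ^ (-v) ≤ 1 := by
  wlog hle : u ≤ v generalizing u v
  · rw [add_comm]
    exact this hv hu (by linarith [mul_comm u v]) (by linarith)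
  have hv1 : 1 ≤ v := by nlinarith
  have h1v : 1 / v ≤ u := by rw [div_le_iff₀ hv]; nlinarith
  have hmono : (2:ℝ) ^ (-u) ≤ (2:ℝ) ^ (-(1/v)) :=
    Real.rpow_le_rpow_of_exponent_le one_le_two (by linarith)
  have hcv := core hv1
  have e1 : (2:ℝ) ^ (-v) = Real.exp (-(v * Real.log 2)) := by
    rw [Real.rpow_def_of_pos two_pos]; ring_nf
  have e2 : (2:ℝ) ^ (-(1/v)) = Real.exp (-(Real.log 2 / v)) := by
    rw [Real.rpow_def_of_pos two_pos]
    congr 1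
    field_simp
  rw [e2] at hmono
  rw [e1]
  linarith [hmono, hcv]

lemma step_lemma {A B : ℝ} (hA : 1 ≤ A) (hB : 1 ≤ B) :
    (2:ℝ) ^ (2 * Real.sqrt ((A-1) * B)) + (2:ℝ) ^ (2 * Real.sqrt (A * (B-1)))
      ≤ (2:ℝ) ^ (2 * Real.sqrt (A * B)) := by
  have hA0 : (0:ℝ) < A := by linarith
  have hB0 : (0:ℝ) < B := by linarith
  set s := Real.sqrt (A * B) with hs
  set p := Real.sqrt ((A-1) * B) with hp
  set q := Real.sqrt (A * (B-1)) with hq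
  have hs2 : s ^ 2 = A * B := Real.sq_sqrt (by nlinarith)
  have hp2 : p ^ 2 = (A-1) * B := Real.sq_sqrt (by nlinarith)
  have hq2 : q ^ 2 = A * (B-1) := Real.sq_sqrt (by nlinarith)
  have hs0 : 0 < s := Real.sqrt_pos.2 (by nlinarith)
  have hp0 : 0 ≤ p := Real.sqrt_nonneg _
  have hq0 : 0 ≤ q := Real.sqrt_nonneg _
  have hps : p < s := by nlinarith
  have hqs : q < s := by nlinarith
  have hBle : B ≤ 2 * s * (s - p) := by nlinarith
  have hAle : A ≤ 2 * s * (s - q) := by nlinarith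
  have hABle : A * B ≤ (2 * s * (s - q)) * (2 * s * (s - p)) :=
    mul_le_mul hAle hBle (by linarith) (by nlinarith)
  have huv : 1 ≤ (2 * (s - p)) * (2 * (s - q)) := by
    nlinarith [hABle, hs2, hs0, mul_pos hA0 hB0]
  set u := 2 * (s - p) with hu
  set v := 2 * (s - q) with hv
  have hu0 : 0 < u := by simp only [hu]; linarith
  have hv0 : 0 < v := by simp only [hv]; linarith
  have hcore := two_rpow_core hu0 hv0 huv
  have e1 : (2:ℝ) ^ (2 * p) = (2:ℝ) ^ (2 * s) * (2:ℝ) ^ (-u) := by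
    rw [← Real.rpow_add two_pos]
    congr 1
    simp only [hu]; ring
  have e2 : (2:ℝ) ^ (2 * q) = (2:ℝ) ^ (2 * s) * (2:ℝ) ^ (-v) := by
    rw [← Real.rpow_add two_pos]
    congr 1
    simp only [hv]; ring
  rw [e1, e2, ← mul_add]
  calc (2:ℝ) ^ (2*s) * ((2:ℝ) ^ (-u) + (2:ℝ) ^ (-v))
      ≤ (2:ℝ) ^ (2*s) * 1 := by
        exact mul_le_mul_of_nonneg_left hcore (Real.rpow_nonneg (by norm_num) _)
    _ = (2:ℝ) ^ (2*s) := mul_one _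

/-- If `a` and `b` are non-negative integers, then `C(a+b, a) ≤ 2^(2√(ab))`. -/
theorem binom_le_two_pow_sqrt (a b : ℕ) :
    (((a + b).choose a : ℝ)) ≤ (2 : ℝ) ^ (2 * Real.sqrt ((a : ℝ) * b)) := by
  suffices H : ∀ n, ∀ a b : ℕ, a + b = n →
      (((a + b).choose a : ℝ)) ≤ (2:ℝ) ^ (2 * Real.sqrt ((a:ℝ) * b)) from H (a+b) a b rfl
  intro n
  induction n using Nat.strong_induction_on with
  | _ n ih =>
    intro a b hab
    match a, b with
    | 0, b => simp
    | a+1, 0 => simp [Nat.choose_self]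
    | a+1, b+1 =>
      have hch : ((a+1) + (b+1)).choose (a+1)
          = (a + (b+1)).choose a + ((a+1) + b).choose (a+1) := by
        rw [show (a+1)+(b+1) = (a + b + 1) + 1 from by omega, Nat.choose_succ_succ]
        congr 2 <;> omega
      have h1 := ih (a + (b+1)) (by omega) a (b+1) rfl
      have h2 := ih ((a+1) + b) (by omega) (a+1) b rfl
      have ha1 : (1:ℝ) ≤ (a:ℝ) + 1 := by linarith [Nat.cast_nonneg (α := ℝ) a]
      have hb1 : (1:ℝ) ≤ (b:ℝ) + 1 := by linarith [Nat.cast_nonneg (α := ℝ) b]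
      have key := step_lemma ha1 hb1
      have e1 : ((a:ℝ) + 1 - 1) * ((b:ℝ) + 1) = (a:ℝ) * (((b:ℕ)+1 : ℕ):ℝ) := by
        push_cast; ring
      have e2 : ((a:ℝ) + 1) * ((b:ℝ) + 1 - 1) = (((a:ℕ)+1 : ℕ):ℝ) * (b:ℝ) := by
        push_cast; ring
      rw [e1, e2] at key
      have goal_eq : ((((a+1) + (b+1)).choose (a+1) : ℕ) : ℝ)
          = ((a + (b+1)).choose a : ℝ) + (((a+1) + b).choose (a+1) : ℝ) := by
        rw [hch]; push_cast; ring
      have hcast : ((((a:ℕ)+1 : ℕ)):ℝ) * (((b:ℕ)+1 : ℕ):ℝ) = ((a:ℝ)+1) * ((b:ℝ)+1) := by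
        push_cast; ring
      calc ((((a+1) + (b+1)).choose (a+1) : ℕ) : ℝ)
          = ((a + (b+1)).choose a : ℝ) + (((a+1) + b).choose (a+1) : ℝ) := goal_eq
        _ ≤ (2:ℝ) ^ (2 * Real.sqrt ((a:ℝ) * ((b:ℕ)+1 : ℕ)))
            + (2:ℝ) ^ (2 * Real.sqrt ((((a:ℕ)+1 : ℕ):ℝ) * (b:ℝ))) := by
            exact add_le_add h1 h2
        _ ≤ (2:ℝ) ^ (2 * Real.sqrt (((a:ℝ)+1) * ((b:ℝ)+1))) := by
            rw [← hcast] at key ⊢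
            exact key
        _ = (2:ℝ) ^ (2 * Real.sqrt ((((a:ℕ)+1:ℕ):ℝ) * (((b:ℕ)+1:ℕ):ℝ))) := by
            rw [hcast]
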